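/- For a complex number z with |z| < 1, 6·Li_{1,1,1}(z,z,z) = Li_1(z)^3, i.e., 6·Σ_{m1>m2>m3>0} z^{m1}/(m1·m2·m3) = (Σ_{m>0} z^m/m)^3 = (-log(1-z))^3. -/

import Mathlib

noncomputable def Li (k : ℕ) (z : ℂ) : ℂ :=
  ∑' m : ℕ, if 0 < m then z ^ m / (m : ℂ) ^ k else 0

noncomputable def Li3 (k1 k2 k3 : ℕ) (z1 z2 z3 : ℂ) : ℂ :=
  ∑' t : ℕ × ℕ × ℕ, if t.2.1 < t.1 ∧ t.2.2 < t.2.1 ∧ 0 < t.2.2 then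
    z1 ^ (t.1 - t.2.1) * z2 ^ (t.2.1 - t.2.2) * z3 ^ t.2.2 /
      ((t.1 : ℂ) ^ k1 * (t.2.1 : ℂ) ^ k2 * (t.2.2 : ℂ) ^ k3) else 0

open Finset

/-- Triples `(a,b,c)` of positive naturals with `a+b+c = N`. -/
def TT (N : ℕ) : Finset (ℕ × ℕ × ℕ) :=
  ((range N) ×ˢ (range N) ×ˢ (range N)).filter
    (fun t => t.1 + t.2.1 + t.2.2 = N ∧ 0 < t.1 ∧ 0 < t.2.1 ∧ 0 < t.2.2)

/-- Pairs `(m₂, m₃)` with `N > m₂ > m₃ > 0`. -/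
def SS (N : ℕ) : Finset (ℕ × ℕ) :=
  ((range N) ×ˢ (range N)).filter (fun p => p.2 < p.1 ∧ 0 < p.2)

lemma mem_TT {N : ℕ} {t : ℕ × ℕ × ℕ} :
    t ∈ TT N ↔ t.1 + t.2.1 + t.2.2 = N ∧ 0 < t.1 ∧ 0 < t.2.1 ∧ 0 < t.2.2 := by
  simp only [TT, mem_filter, mem_product, mem_range]
  omega

lemma mem_SS {N : ℕ} {p : ℕ × ℕ} :
    p ∈ SS N ↔ p.1 < N ∧ p.2 < p.1 ∧ 0 < p.2 := by
  simp only [SS, mem_filter, mem_product, mem_range]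
  omega

lemma sum_TT_cycle (N : ℕ) (f : ℕ × ℕ × ℕ → ℂ) :
    ∑ t ∈ TT N, f t = ∑ t ∈ TT N, f (t.2.1, t.2.2, t.1) := by
  refine Finset.sum_nbij' (fun t => (t.2.2, t.1, t.2.1)) (fun t => (t.2.1, t.2.2, t.1))
    ?_ ?_ ?_ ?_ ?_ <;> intro t ht <;> simp only [mem_TT] at * <;> try omega

lemma sum_TT_swap23 (N : ℕ) (f : ℕ × ℕ × ℕ → ℂ) :
    ∑ t ∈ TT N, f t = ∑ t ∈ TT N, f (t.1, t.2.2, t.2.1) := by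
  refine Finset.sum_nbij' (fun t => (t.1, t.2.2, t.2.1)) (fun t => (t.1, t.2.2, t.2.1))
    ?_ ?_ ?_ ?_ ?_ <;> intro t ht <;> simp only [mem_TT] at * <;> try omega

lemma sum_TT_swap12 (N : ℕ) (f : ℕ × ℕ × ℕ → ℂ) :
    ∑ t ∈ TT N, f t = ∑ t ∈ TT N, f (t.2.1, t.1, t.2.2) := by
  refine Finset.sum_nbij' (fun t => (t.2.1, t.1, t.2.2)) (fun t => (t.2.1, t.1, t.2.2))
    ?_ ?_ ?_ ?_ ?_ <;> intro t ht <;> simp only [mem_TT] at * <;> try omega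

lemma sum_SS_to_TT (N : ℕ) :
    ∑ p ∈ SS N, (((N - p.1 : ℕ) : ℂ) * ((p.1 - p.2 : ℕ) : ℂ) * (p.2 : ℂ))⁻¹
      = ∑ t ∈ TT N, ((t.1 : ℂ) * (t.2.1 : ℂ) * (t.2.2 : ℂ))⁻¹ := by
  refine Finset.sum_nbij' (fun p => (N - p.1, p.1 - p.2, p.2)) (fun t => (t.2.1 + t.2.2, t.2.2))
    ?_ ?_ ?_ ?_ ?_ <;> intro t ht <;>
    simp only [mem_TT, mem_SS, Prod.ext_iff, and_true, true_and] at * <;> try omega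

lemma keyN (N : ℕ) :
    (N : ℂ) * ∑ t ∈ TT N, ((t.1 : ℂ) * t.2.1 * t.2.2)⁻¹
      = 6 * ∑ p ∈ SS N, ((p.1 : ℂ) * p.2)⁻¹ := by
  have h1 : (N : ℂ) * ∑ t ∈ TT N, ((t.1 : ℂ) * t.2.1 * t.2.2)⁻¹
      = 3 * ∑ t ∈ TT N, ((t.1 : ℂ) * t.2.1)⁻¹ := by
    rw [mul_sum]
    have e1 : ∑ t ∈ TT N, (N : ℂ) * ((t.1 : ℂ) * t.2.1 * t.2.2)⁻¹
        = ∑ t ∈ TT N,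
          (((t.2.1 : ℂ) * t.2.2)⁻¹ + ((t.1 : ℂ) * t.2.2)⁻¹ + ((t.1 : ℂ) * t.2.1)⁻¹) := by
      refine Finset.sum_congr rfl fun t ht => ?_
      rw [mem_TT] at ht
      obtain ⟨hs, ha, hb, hc⟩ := ht
      have ha' : (t.1 : ℂ) ≠ 0 := Nat.cast_ne_zero.2 ha.ne'
      have hb' : (t.2.1 : ℂ) ≠ 0 := Nat.cast_ne_zero.2 hb.ne'
      have hc' : (t.2.2 : ℂ) ≠ 0 := Nat.cast_ne_zero.2 hc.ne'
      subst hs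
      push_cast
      field_simp
    rw [e1, Finset.sum_add_distrib, Finset.sum_add_distrib]
    rw [show ∑ t ∈ TT N, ((t.2.1 : ℂ) * t.2.2)⁻¹
        = ∑ t ∈ TT N, ((t.1 : ℂ) * t.2.1)⁻¹ from
      (sum_TT_cycle N (fun t => ((t.1 : ℂ) * t.2.1)⁻¹)).symm]
    rw [show ∑ t ∈ TT N, ((t.1 : ℂ) * t.2.2)⁻¹
        = ∑ t ∈ TT N, ((t.1 : ℂ) * t.2.1)⁻¹ from
      (sum_TT_swap23 N (fun t => ((t.1 : ℂ) * t.2.1)⁻¹)).symm]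
    ring
  have h2 : ∑ t ∈ TT N, ((t.1 : ℂ) * t.2.1)⁻¹
      = 2 * ∑ t ∈ TT N, (((t.1 + t.2.1 : ℕ) : ℂ) * t.1)⁻¹ := by
    have e2 : ∑ t ∈ TT N, ((t.1 : ℂ) * t.2.1)⁻¹
        = ∑ t ∈ TT N,
          ((((t.1 + t.2.1 : ℕ) : ℂ) * t.2.1)⁻¹ + (((t.1 + t.2.1 : ℕ) : ℂ) * t.1)⁻¹) := by
      refine Finset.sum_congr rfl fun t ht => ?_
      rw [mem_TT] at ht
      obtain ⟨hs, ha, hb, hc⟩ := ht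
      have ha' : (t.1 : ℂ) ≠ 0 := Nat.cast_ne_zero.2 ha.ne'
      have hb' : (t.2.1 : ℂ) ≠ 0 := Nat.cast_ne_zero.2 hb.ne'
      have hab' : ((t.1 + t.2.1 : ℕ) : ℂ) ≠ 0 := Nat.cast_ne_zero.2 (by omega)
      push_cast at hab' ⊢
      field_simp
    rw [e2, Finset.sum_add_distrib]
    rw [show ∑ t ∈ TT N, (((t.1 + t.2.1 : ℕ) : ℂ) * t.2.1)⁻¹
        = ∑ t ∈ TT N, (((t.1 + t.2.1 : ℕ) : ℂ) * t.1)⁻¹ from by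
      rw [sum_TT_swap12 N (fun t => (((t.1 + t.2.1 : ℕ) : ℂ) * t.1)⁻¹)]
      exact Finset.sum_congr rfl fun t ht => by rw [Nat.add_comm]]
    ring
  have h3 : ∑ t ∈ TT N, (((t.1 + t.2.1 : ℕ) : ℂ) * t.1)⁻¹
      = ∑ p ∈ SS N, ((p.1 : ℂ) * p.2)⁻¹ := by
    refine Finset.sum_nbij' (fun t => (t.1 + t.2.1, t.1)) (fun p => (p.2, p.1 - p.2, N - p.1))
      ?_ ?_ ?_ ?_ ?_ <;> intro t ht <;>
      simp only [mem_TT, mem_SS, Prod.ext_iff, and_true, true_and] at * <;> try omega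
  rw [h1, h2, h3]
  ring
noncomputable def fz (z : ℂ) : ℕ → ℂ := fun n => if 0 < n then z ^ n / n else 0

lemma fz_eq (z : ℂ) (n : ℕ) : fz z n = z ^ n / n := by
  rcases n with _ | n
  · simp [fz]
  · simp [fz]

lemma fz_pos {z : ℂ} {n : ℕ} (h : fz z n ≠ 0) : 0 < n ∧ z ≠ 0 := by
  rcases n with _ | n
  · simp [fz] at h
  · refine ⟨Nat.succ_pos n, fun hz0 => h ?_⟩
    rw [fz_eq, hz0, zero_pow (Nat.succ_ne_zero n), zero_div]

lemma summable_norm_fz {z : ℂ} (hz : ‖z‖ < 1) : Summable fun n => ‖fz z n‖ := by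
  refine Summable.of_nonneg_of_le (fun n => norm_nonneg _) (fun n => ?_)
    (summable_geometric_of_lt_one (norm_nonneg z) hz)
  rw [fz_eq, norm_div, norm_pow]
  rcases Nat.eq_zero_or_pos n with h | h
  · subst h; simp
  · refine div_le_self (pow_nonneg (norm_nonneg z) n) ?_
    rw [Complex.norm_natCast]
    exact_mod_cast h

lemma hasSum_fz {z : ℂ} (hz : ‖z‖ < 1) :
    HasSum (fz z) (-Complex.log (1 - z)) :=
  (funext fun n => (fz_eq z n)).symm ▸ Complex.hasSum_taylorSeries_neg_log hz

lemma Li_one_eq {z : ℂ} (hz : ‖z‖ < 1) : Li 1 z = -Complex.log (1 - z) := by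
  have h : Li 1 z = ∑' n, fz z n := tsum_congr fun n => by simp [fz, pow_one]
  rw [h, (hasSum_fz hz).tsum_eq]

lemma summable_F {z : ℂ} (hz : ‖z‖ < 1) :
    Summable (fun t : ℕ × ℕ × ℕ => fz z t.1 * fz z t.2.1 * fz z t.2.2) :=
  (summable_mul_of_summable_norm (summable_norm_fz hz)
    ((summable_norm_fz hz).mul_norm (summable_norm_fz hz))).congr
    (fun t => (mul_assoc _ _ _).symm)

lemma cube_eq_tsum_F {z : ℂ} (hz : ‖z‖ < 1) :
    (Li 1 z) ^ 3 = ∑' t : ℕ × ℕ × ℕ, fz z t.1 * fz z t.2.1 * fz z t.2.2 := by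
  have hLi : Li 1 z = ∑' n, fz z n := tsum_congr fun n => by simp [fz, pow_one]
  have h2 : (∑' n, fz z n) * (∑' n, fz z n) = ∑' p : ℕ × ℕ, fz z p.1 * fz z p.2 :=
    tsum_mul_tsum_of_summable_norm (summable_norm_fz hz) (summable_norm_fz hz)
  have h3 : (∑' n, fz z n) * (∑' p : ℕ × ℕ, fz z p.1 * fz z p.2)
      = ∑' t : ℕ × ℕ × ℕ, fz z t.1 * (fz z t.2.1 * fz z t.2.2) :=
    tsum_mul_tsum_of_summable_norm (summable_norm_fz hz)
      ((summable_norm_fz hz).mul_norm (summable_norm_fz hz))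
  calc (Li 1 z) ^ 3 = (∑' n, fz z n) * ((∑' n, fz z n) * (∑' n, fz z n)) := by rw [hLi]; ring
    _ = ∑' t : ℕ × ℕ × ℕ, fz z t.1 * fz z t.2.1 * fz z t.2.2 := by
        rw [h2, h3]; exact tsum_congr fun t => (mul_assoc _ _ _).symm

noncomputable def Gz (z : ℂ) : ℕ × ℕ × ℕ → ℂ := fun m =>
  if m.2.1 < m.1 ∧ m.2.2 < m.2.1 ∧ 0 < m.2.2 then
    z ^ m.1 / (((m.1 - m.2.1 : ℕ) : ℂ) * ((m.2.1 - m.2.2 : ℕ) : ℂ) * (m.2.2 : ℂ)) else 0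

lemma Gz_cond {z : ℂ} {m : ℕ × ℕ × ℕ} (h : Gz z m ≠ 0) :
    m.2.1 < m.1 ∧ m.2.2 < m.2.1 ∧ 0 < m.2.2 := by
  by_contra hc; exact h (if_neg hc)

lemma hasSum_F_iff_G (z : ℂ) (a : ℂ) :
    HasSum (fun t : ℕ × ℕ × ℕ => fz z t.1 * fz z t.2.1 * fz z t.2.2) a
      ↔ HasSum (Gz z) a := by
  refine hasSum_iff_hasSum_of_ne_zero_bij
    (fun m => ((m : ℕ × ℕ × ℕ).1 - (m : ℕ × ℕ × ℕ).2.1,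
      (m : ℕ × ℕ × ℕ).2.1 - (m : ℕ × ℕ × ℕ).2.2, (m : ℕ × ℕ × ℕ).2.2)) ?_ ?_ ?_
  · intro x y h
    obtain ⟨hx1, hx2, hx3⟩ := Gz_cond x.2
    obtain ⟨hy1, hy2, hy3⟩ := Gz_cond y.2
    simp only [Prod.mk.injEq] at h
    apply Subtype.ext
    rw [Prod.ext_iff, Prod.ext_iff]
    omega
  · rintro ⟨a, b, c⟩ ht
    rw [Function.mem_support] at ht
    have ha : fz z a ≠ 0 := fun h => ht (by simp [h])
    have hb : fz z b ≠ 0 := fun h => ht (by simp [h])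
    have hc : fz z c ≠ 0 := fun h => ht (by simp [h])
    obtain ⟨hap, hz0⟩ := fz_pos ha
    obtain ⟨hbp, -⟩ := fz_pos hb
    obtain ⟨hcp, -⟩ := fz_pos hc
    have hmem : Gz z (a + b + c, b + c, c) ≠ 0 := by
      rw [Gz]
      dsimp only
      rw [if_pos (show b + c < a + b + c ∧ c < b + c ∧ 0 < c by omega)]
      refine div_ne_zero (pow_ne_zero _ hz0) ?_
      refine mul_ne_zero (mul_ne_zero ?_ ?_) ?_ <;>
        rw [Nat.cast_ne_zero] <;> omega
    refine ⟨⟨(a + b + c, b + c, c), hmem⟩, ?_⟩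
    show (a + b + c - (b + c), b + c - c, c) = (a, b, c)
    simp only [Prod.mk.injEq, and_true]
    omega
  · intro x
    obtain ⟨h1, h2, h3⟩ := Gz_cond x.2
    simp only
    rw [fz_eq, fz_eq, fz_eq, div_mul_div_comm, div_mul_div_comm, ← pow_add, ← pow_add]
    have he : (x : ℕ × ℕ × ℕ).1 - (x : ℕ × ℕ × ℕ).2.1 + ((x : ℕ × ℕ × ℕ).2.1
        - (x : ℕ × ℕ × ℕ).2.2) + (x : ℕ × ℕ × ℕ).2.2 = (x : ℕ × ℕ × ℕ).1 := by omega
    rw [he, Gz, if_pos ⟨h1, h2, h3⟩]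

lemma hasSum_G {z : ℂ} (hz : ‖z‖ < 1) :
    HasSum (Gz z) ((Li 1 z) ^ 3) := by
  rw [cube_eq_tsum_F hz]
  exact (hasSum_F_iff_G z _).1 (summable_F hz).hasSum

noncomputable def Hz (z : ℂ) : ℕ × ℕ × ℕ → ℂ := fun m =>
  if m.2.1 < m.1 ∧ m.2.2 < m.2.1 ∧ 0 < m.2.2 then
    z ^ m.1 * ((m.1 : ℂ) * (m.2.1 : ℂ) * (m.2.2 : ℂ))⁻¹ else 0

lemma Li3_eq_tsum_H (z : ℂ) : Li3 1 1 1 z z z = ∑' m, Hz z m := by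
  rw [Li3]
  refine tsum_congr fun t => ?_
  by_cases h : t.2.1 < t.1 ∧ t.2.2 < t.2.1 ∧ 0 < t.2.2
  · rw [if_pos h, Hz, if_pos h, ← pow_add, ← pow_add]
    have he : t.1 - t.2.1 + (t.2.1 - t.2.2) + t.2.2 = t.1 := by omega
    rw [he, pow_one, pow_one, pow_one, div_eq_mul_inv]
  · rw [if_neg h, Hz, if_neg h]

noncomputable def Bz (z : ℂ) : ℕ × ℕ × ℕ → ℝ := fun m =>
  if m.2.1 < m.1 ∧ m.2.2 < m.2.1 then ‖z‖ ^ m.1 else 0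

lemma Bz_nonneg (z : ℂ) (m : ℕ × ℕ × ℕ) : 0 ≤ Bz z m := by
  rw [Bz]
  split
  · positivity
  · exact le_refl 0

lemma Bz_van (z : ℂ) (m1 : ℕ) :
    ∀ p ∉ Finset.range m1 ×ˢ Finset.range m1, Bz z (m1, p) = 0 := by
  intro p hp
  refine if_neg fun hc => hp ?_
  simp only [Finset.mem_product, Finset.mem_range]
  exact ⟨hc.1, lt_trans hc.2 hc.1⟩

lemma summable_Bz {z : ℂ} (hz : ‖z‖ < 1) : Summable (Bz z) := by
  refine (summable_prod_of_nonneg (fun m => Bz_nonneg z m)).2 ⟨fun m1 =>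
    (hasSum_sum_of_ne_finset_zero (Bz_van z m1)).summable, ?_⟩
  refine Summable.of_nonneg_of_le (fun m1 => tsum_nonneg fun p => Bz_nonneg z _)
    (fun m1 => ?_) (summable_pow_mul_geometric_of_norm_lt_one (R := ℝ) 2 (r := ‖z‖) (by rwa [norm_norm]))
  rw [tsum_eq_sum (Bz_van z m1)]
  calc ∑ p ∈ Finset.range m1 ×ˢ Finset.range m1, Bz z (m1, p)
      ≤ (Finset.range m1 ×ˢ Finset.range m1).card • (‖z‖ ^ m1) := by
        refine Finset.sum_le_card_nsmul _ _ _ fun p _ => ?_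
        rw [Bz]
        split
        · exact le_refl _
        · positivity
    _ = (m1 : ℝ) ^ 2 * ‖z‖ ^ m1 := by
        rw [Finset.card_product, Finset.card_range, nsmul_eq_mul]
        push_cast
        ring

lemma summable_Hz {z : ℂ} (hz : ‖z‖ < 1) : Summable (Hz z) := by
  refine Summable.of_norm_bounded (summable_Bz hz) fun m => ?_
  by_cases h : m.2.1 < m.1 ∧ m.2.2 < m.2.1 ∧ 0 < m.2.2
  · rw [Hz, if_pos h, Bz, if_pos ⟨h.1, h.2.1⟩, norm_mul, norm_pow, norm_inv]
    have h1 : (1 : ℝ) ≤ ‖(m.1 : ℂ) * (m.2.1 : ℂ) * (m.2.2 : ℂ)‖ := by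
      rw [norm_mul, norm_mul, Complex.norm_natCast, Complex.norm_natCast,
        Complex.norm_natCast]
      have ha : (1 : ℝ) ≤ (m.1 : ℝ) := by exact_mod_cast Nat.one_le_iff_ne_zero.2 (by omega)
      have hb : (1 : ℝ) ≤ (m.2.1 : ℝ) := by exact_mod_cast Nat.one_le_iff_ne_zero.2 (by omega)
      have hc : (1 : ℝ) ≤ (m.2.2 : ℝ) := by exact_mod_cast Nat.one_le_iff_ne_zero.2 (by omega)
      have hbc : (1 : ℝ) ≤ (m.2.1 : ℝ) * (m.2.2 : ℝ) := by nlinarith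
      nlinarith
    have : ‖(m.1 : ℂ) * (m.2.1 : ℂ) * (m.2.2 : ℂ)‖⁻¹ ≤ 1 := by
      rw [inv_le_one_iff₀]
      right
      exact h1
    calc ‖z‖ ^ m.1 * ‖(m.1 : ℂ) * (m.2.1 : ℂ) * (m.2.2 : ℂ)‖⁻¹
        ≤ ‖z‖ ^ m.1 * 1 := by
          refine mul_le_mul_of_nonneg_left this (by positivity)
      _ = ‖z‖ ^ m.1 := mul_one _
  · rw [Hz, if_neg h, norm_zero]
    exact Bz_nonneg z m

lemma Gz_van (z : ℂ) (m1 : ℕ) : ∀ p ∉ SS m1, Gz z (m1, p) = 0 := by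
  intro p hp
  refine if_neg fun hc => hp (mem_SS.2 ⟨hc.1, hc.2.1, hc.2.2⟩)

lemma Hz_van (z : ℂ) (m1 : ℕ) : ∀ p ∉ SS m1, Hz z (m1, p) = 0 := by
  intro p hp
  refine if_neg fun hc => hp (mem_SS.2 ⟨hc.1, hc.2.1, hc.2.2⟩)

lemma tsum_G_eq {z : ℂ} (hz : ‖z‖ < 1) :
    (Li 1 z) ^ 3 = ∑' m1 : ℕ, z ^ m1 * ∑ t ∈ TT m1, ((t.1 : ℂ) * t.2.1 * t.2.2)⁻¹ := by
  rw [← (hasSum_G hz).tsum_eq]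
  rw [Summable.tsum_prod' (hasSum_G hz).summable
    (fun m1 => (hasSum_sum_of_ne_finset_zero (Gz_van z m1)).summable)]
  refine tsum_congr fun m1 => ?_
  rw [tsum_eq_sum (Gz_van z m1), ← sum_SS_to_TT, Finset.mul_sum]
  refine Finset.sum_congr rfl fun p hp => ?_
  rw [mem_SS] at hp
  rw [Gz, if_pos (show p.1 < m1 ∧ p.2 < p.1 ∧ 0 < p.2 from hp), div_eq_mul_inv]

lemma tsum_H_eq {z : ℂ} (hz : ‖z‖ < 1) :
    Li3 1 1 1 z z z = ∑' m1 : ℕ, ∑ p ∈ SS m1, z ^ m1 * ((m1 : ℂ) * p.1 * p.2)⁻¹ := by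
  rw [Li3_eq_tsum_H]
  rw [Summable.tsum_prod' (summable_Hz hz)
    (fun m1 => (hasSum_sum_of_ne_finset_zero (Hz_van z m1)).summable)]
  refine tsum_congr fun m1 => ?_
  rw [tsum_eq_sum (Hz_van z m1)]
  exact Finset.sum_congr rfl fun p hp => by
    rw [mem_SS] at hp
    rw [Hz, if_pos (show p.1 < m1 ∧ p.2 < p.1 ∧ 0 < p.2 from hp)]

lemma perN (z : ℂ) (N : ℕ) :
    6 * ∑ p ∈ SS N, z ^ N * ((N : ℂ) * p.1 * p.2)⁻¹
      = z ^ N * ∑ t ∈ TT N, ((t.1 : ℂ) * t.2.1 * t.2.2)⁻¹ := by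
  rcases Nat.eq_zero_or_pos N with h | h
  · subst h
    simp [SS, TT]
  · have hN : (N : ℂ) ≠ 0 := Nat.cast_ne_zero.2 h.ne'
    have e : ∑ p ∈ SS N, z ^ N * ((N : ℂ) * p.1 * p.2)⁻¹
        = z ^ N * (N : ℂ)⁻¹ * ∑ p ∈ SS N, ((p.1 : ℂ) * p.2)⁻¹ := by
      rw [Finset.mul_sum]
      refine Finset.sum_congr rfl fun p _ => ?_
      rw [mul_inv, mul_inv, mul_inv]
      ring
    rw [e]
    have k := keyN N
    calc 6 * (z ^ N * (N : ℂ)⁻¹ * ∑ p ∈ SS N, ((p.1 : ℂ) * p.2)⁻¹)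
        = z ^ N * (N : ℂ)⁻¹ * (6 * ∑ p ∈ SS N, ((p.1 : ℂ) * p.2)⁻¹) := by ring
      _ = z ^ N * (N : ℂ)⁻¹ * ((N : ℂ) * ∑ t ∈ TT N, ((t.1 : ℂ) * t.2.1 * t.2.2)⁻¹) := by
          rw [← k]
      _ = z ^ N * ∑ t ∈ TT N, ((t.1 : ℂ) * t.2.1 * t.2.2)⁻¹ := by
          rw [mul_assoc, ← mul_assoc ((N : ℂ))⁻¹, inv_mul_cancel₀ hN, one_mul]

theorem triple_polylog_weight_three (z : ℂ) (hz : ‖z‖ < 1) :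
    6 * Li3 1 1 1 z z z = (Li 1 z) ^ 3 ∧
    (Li 1 z) ^ 3 = (-Complex.log (1 - z)) ^ 3 := by
  constructor
  · rw [tsum_H_eq hz, tsum_G_eq hz, ← tsum_mul_left]
    exact tsum_congr fun m1 => perN z m1
  · rw [Li_one_eq hz]
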